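/- Let A be uniformly distributed over k-element subsets of [n], and let f be any function mapping k-element subsets of [n] to a countable index set such that each index t is assigned only to subsets covered by a single associated k-partition of [n]. Then the entropy H(f(A)) ≥ (1 − (n^k k!)/(n^{\underline{k}} k^k))·log(k^k/k!) − log(n^k/n^{\underline{k}}), where n^{\underline{k}} = n(n−1)···(n−k+1). -/

import Mathlib

open Real Finset


-- AM-GM: prod * k^k ≤ sum^k
lemma amgm (k : ℕ) (hk : 1 ≤ k) (m : Fin k → ℝ) (hm : ∀ j, 0 ≤ m j) :
    (∏ j, m j) * (k : ℝ) ^ k ≤ (∑ j, m j) ^ k := by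
  have hk0 : (0:ℝ) < k := by positivity
  have h := Real.geom_mean_le_arith_mean_weighted Finset.univ (fun _ => 1 / (k:ℝ)) m
    (fun i _ => by positivity)
    (by simp [Finset.card_univ]; field_simp)
    (fun i _ => hm i)
  -- h : ∏ j, m j ^ (1/k) ≤ ∑ j, (1/k) * m j
  have h2 : (∏ j, m j ^ (1/(k:ℝ) : ℝ)) ^ k ≤ (∑ j, (1/(k:ℝ)) * m j) ^ k :=
    pow_le_pow_left₀ (Finset.prod_nonneg fun j _ => Real.rpow_nonneg (hm j) _) h k
  have hL : (∏ j, m j ^ (1/(k:ℝ) : ℝ)) ^ k = ∏ j, m j := by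
    rw [← Finset.prod_pow]
    congr 1; ext j
    rw [← Real.rpow_natCast (m j ^ (1/(k:ℝ):ℝ)) k, ← Real.rpow_mul (hm j)]
    rw [one_div, inv_mul_cancel₀ (ne_of_gt hk0), Real.rpow_one]
  have hR : (∑ j, (1/(k:ℝ)) * m j) ^ k = (∑ j, m j) ^ k / (k:ℝ)^k := by
    rw [← Finset.mul_sum, mul_pow, div_pow, one_pow, one_div]
    ring
  rw [hL, hR] at h2
  rw [← le_div_iff₀ (by positivity)] at *
  exact h2

lemma count (n k : ℕ) (hk : 1 ≤ k) (p : Fin n → Fin k) (S : Finset (Finset (Fin n)))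
    (hS : ∀ A ∈ S, A.card = k ∧ Set.InjOn p (A : Set (Fin n))) :
    (S.card : ℝ) * (k : ℝ) ^ k ≤ (n : ℝ) ^ k := by
  classical
  set m : Fin k → ℕ := fun j => (Finset.univ.filter (fun x : Fin n => p x = j)).card with hm
  have hsum : ∑ j, m j = n := by
    have := Finset.card_eq_sum_card_fiberwise (f := p) (s := (Finset.univ : Finset (Fin n)))
      (t := Finset.univ) (fun x _ => Finset.mem_univ _)
    simpa [Finset.card_univ] using this.symm
  -- surjectivity fact
  have hsurj : ∀ A ∈ S, ∀ j : Fin k, ∃ x, x ∈ A ∧ p x = j := by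
    intro A hA j
    obtain ⟨hcard, hinj⟩ := hS A hA
    have himg : A.image p = Finset.univ := by
      apply Finset.eq_univ_of_card
      rw [Finset.card_image_of_injOn hinj, hcard]
      simp
    have : j ∈ A.image p := by rw [himg]; exact Finset.mem_univ _
    simpa [Finset.mem_image] using this
  rcases S.eq_empty_or_nonempty with rfl | ⟨A₀, hA₀⟩
  · simp only [Finset.card_empty, Nat.cast_zero, zero_mul]
    positivity
  have hn1 : 1 ≤ n := by
    have h1 := Finset.card_le_univ A₀
    rw [(hS A₀ hA₀).1] at h1
    simp at h1
    exact le_trans hk h1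
  haveI : Inhabited (Fin n) := ⟨⟨0, hn1⟩⟩
  set g : Finset (Fin n) → Fin k → Fin n := fun A j =>
    if h : ∃ x, x ∈ A ∧ p x = j then h.choose else default with hg
  have hgmem : ∀ A ∈ S, ∀ j, g A j ∈ A ∧ p (g A j) = j := by
    intro A hA j
    have h := hsurj A hA j
    simp only [hg, dif_pos h]
    exact h.choose_spec
  have hfix : ∀ A ∈ S, ∀ x ∈ A, g A (p x) = x := by
    intro A hA x hx
    obtain ⟨hmem, hpx⟩ := hgmem A hA (p x)
    exact (hS A hA).2 hmem hx hpx
  have hrec : ∀ A ∈ S, A = Finset.univ.image (g A) := by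
    intro A hA
    ext x
    simp only [Finset.mem_image, Finset.mem_univ, true_and]
    constructor
    · intro hx; exact ⟨p x, hfix A hA x hx⟩
    · rintro ⟨j, rfl⟩; exact (hgmem A hA j).1
  have hcardle : S.card ≤ ∏ j, m j := by
    rw [← Fintype.card_piFinset (fun j : Fin k => Finset.univ.filter (fun x : Fin n => p x = j))]
    apply Finset.card_le_card_of_injOn g
    · intro A hA
      rw [Finset.mem_coe, Fintype.mem_piFinset]
      intro j
      simp only [Finset.mem_filter, Finset.mem_univ, true_and]
      exact (hgmem A hA j).2
    · intro A hA B hB hAB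
      rw [hrec A hA, hrec B hB, hAB]
  calc (S.card : ℝ) * (k:ℝ)^k ≤ (∏ j, (m j : ℝ)) * (k:ℝ)^k := by
        apply mul_le_mul_of_nonneg_right _ (by positivity)
        rw [← Nat.cast_prod]
        exact_mod_cast hcardle
    _ ≤ (∑ j, (m j : ℝ)) ^ k := amgm k hk _ (fun j => by positivity)
    _ = (n : ℝ) ^ k := by rw [← Nat.cast_sum, hsum]

/-- Let A be uniform over k-element subsets of [n] and f an encoder such that
every index t is assigned only to subsets covered by a single associated
k-partition P t (i.e., P (f A) is injective on A). Then the entropy of f(A) is at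
least (1 − n^k k!/(n^{\underline k} k^k))·log₂(k^k/k!) − log₂(n^k/n^{\underline k}). -/
theorem stmt10 (n k : ℕ) (hk : 1 ≤ k) (hkn : k ≤ n)
    (f : Finset (Fin n) → ℕ) (P : ℕ → Fin n → Fin k)
    (hP : ∀ A : Finset (Fin n), A.card = k → Set.InjOn (P (f A)) (A : Set (Fin n))) :
    -∑ t ∈ ((Finset.univ.filter (fun A : Finset (Fin n) => A.card = k)).image f),
        (((Finset.univ.filter (fun A : Finset (Fin n) => A.card = k ∧ f A = t)).card : ℝ)
            / (Nat.choose n k : ℝ)) *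
          Real.logb 2
            (((Finset.univ.filter (fun A : Finset (Fin n) => A.card = k ∧ f A = t)).card : ℝ)
              / (Nat.choose n k : ℝ))
      ≥ (1 - ((n : ℝ) ^ k * (Nat.factorial k : ℝ))
            / ((Nat.descFactorial n k : ℝ) * (k : ℝ) ^ k)) *
          Real.logb 2 ((k : ℝ) ^ k / (Nat.factorial k : ℝ))
        - Real.logb 2 ((n : ℝ) ^ k / (Nat.descFactorial n k : ℝ)) := by
    classical
  have hn : 1 ≤ n := le_trans hk hkn
  have hkR : (0:ℝ) < k := by exact_mod_cast hk
  have hnR : (0:ℝ) < n := by exact_mod_cast hn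
  have hN : 0 < Nat.choose n k := Nat.choose_pos hkn
  have hNR : (0:ℝ) < (Nat.choose n k : ℝ) := by exact_mod_cast hN
  have hdesc : 0 < Nat.descFactorial n k :=
    Nat.pos_of_ne_zero (fun h => absurd (Nat.descFactorial_eq_zero_iff_lt.1 h) (not_lt.2 hkn))
  have hdR : (0:ℝ) < (Nat.descFactorial n k : ℝ) := by exact_mod_cast hdesc
  have hfR : (0:ℝ) < (Nat.factorial k : ℝ) := by exact_mod_cast k.factorial_pos
  set s := (Finset.univ.filter (fun A : Finset (Fin n) => A.card = k)).image f with hs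
  set c : ℕ → ℕ := fun t =>
    (Finset.univ.filter (fun A : Finset (Fin n) => A.card = k ∧ f A = t)).card with hc
  set v : ℝ := ((n : ℝ) ^ k * (Nat.factorial k : ℝ))
      / ((Nat.descFactorial n k : ℝ) * (k : ℝ) ^ k) with hv
  have hvpos : 0 < v := by rw [hv]; positivity
  -- sum of fiber cards
  have hsumc : ∑ t ∈ s, c t = Nat.choose n k := by
    have h1 : ∀ A ∈ Finset.univ.filter (fun A : Finset (Fin n) => A.card = k), f A ∈ s :=
      fun A hA => Finset.mem_image_of_mem f hA
    have h2 := Finset.card_eq_sum_card_fiberwise h1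
    simp only [Finset.filter_filter] at h2
    have h3 : (Finset.univ.filter (fun A : Finset (Fin n) => A.card = k)).card
        = Nat.choose n k := by
      rw [Finset.univ_filter_card_eq, Finset.card_powersetCard, Finset.card_univ,
        Fintype.card_fin]
    rw [h3] at h2
    exact h2.symm
  -- per-fiber counting bound
  have hct : ∀ t, (c t : ℝ) * (k:ℝ)^k ≤ (n:ℝ)^k := by
    intro t
    apply count n k hk (P t)
    intro A hA
    simp only [Finset.mem_filter, Finset.mem_univ, true_and] at hA
    exact ⟨hA.1, hA.2 ▸ hP A hA.1⟩
  have hpv : ∀ t, (c t : ℝ) / (Nat.choose n k : ℝ) ≤ v := by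
    intro t
    rw [hv, div_le_div_iff₀ hNR (by positivity)]
    have hdesc' : (Nat.descFactorial n k : ℝ)
        = (Nat.factorial k : ℝ) * (Nat.choose n k : ℝ) := by
      exact_mod_cast Nat.descFactorial_eq_factorial_mul_choose n k
    rw [hdesc']
    calc (c t : ℝ) * ((Nat.factorial k : ℝ) * (Nat.choose n k : ℝ) * (k:ℝ)^k)
        = ((c t : ℝ) * (k:ℝ)^k) * ((Nat.factorial k : ℝ) * (Nat.choose n k : ℝ)) := by ring
      _ ≤ (n:ℝ)^k * ((Nat.factorial k : ℝ) * (Nat.choose n k : ℝ)) :=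
          mul_le_mul_of_nonneg_right (hct t) (by positivity)
      _ = (n:ℝ)^k * (Nat.factorial k : ℝ) * (Nat.choose n k : ℝ) := by ring
  -- entropy lower bound
  have hkey : ∑ t ∈ s, ((c t : ℝ) / (Nat.choose n k : ℝ))
      * Real.logb 2 ((c t : ℝ) / (Nat.choose n k : ℝ)) ≤ Real.logb 2 v := by
    have hsum1 : ∑ t ∈ s, ((c t : ℝ) / (Nat.choose n k : ℝ)) = 1 := by
      rw [← Finset.sum_div]
      rw [div_eq_one_iff_eq (ne_of_gt hNR)]
      exact_mod_cast hsumc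
    calc ∑ t ∈ s, ((c t : ℝ) / (Nat.choose n k : ℝ))
          * Real.logb 2 ((c t : ℝ) / (Nat.choose n k : ℝ))
        ≤ ∑ t ∈ s, ((c t : ℝ) / (Nat.choose n k : ℝ)) * Real.logb 2 v := by
          apply Finset.sum_le_sum
          intro t ht
          have hpos : (0:ℝ) < (c t : ℝ) / (Nat.choose n k : ℝ) := by
            apply div_pos _ hNR
            have : 0 < c t := by
              rw [hc, Finset.card_pos]
              obtain ⟨A, hA, rfl⟩ := Finset.mem_image.1 ht
              simp only [Finset.mem_filter, Finset.mem_univ, true_and] at hA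
              exact ⟨A, by simp [Finset.mem_filter, hA]⟩
            exact_mod_cast this
          exact mul_le_mul_of_nonneg_left
            (Real.logb_le_logb_of_le one_lt_two hpos (hpv t)) hpos.le
      _ = Real.logb 2 v := by rw [← Finset.sum_mul, hsum1, one_mul]
  have hlogv : Real.logb 2 v
      = Real.logb 2 ((n:ℝ)^k / (Nat.descFactorial n k : ℝ))
        - Real.logb 2 ((k:ℝ)^k / (Nat.factorial k : ℝ)) := by
    rw [← Real.logb_div (by positivity) (by positivity), hv]
    congr 1
    field_simp
  have ha : 0 ≤ Real.logb 2 ((k:ℝ)^k / (Nat.factorial k : ℝ)) := by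
    apply Real.logb_nonneg one_lt_two
    rw [le_div_iff₀ hfR, one_mul]
    exact_mod_cast k.factorial_le_pow
  have hgoal : (1 - v) * Real.logb 2 ((k:ℝ)^k / (Nat.factorial k : ℝ))
      - Real.logb 2 ((n:ℝ)^k / (Nat.descFactorial n k : ℝ)) ≤ -Real.logb 2 v := by
    rw [hlogv]
    nlinarith [mul_nonneg hvpos.le ha]
  exact le_trans hgoal (neg_le_neg hkey)
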